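/- arXiv:1807.11030 — 15 statements merged into one kernel-verified Lean document; each statement's English description precedes it below -/
import Mathlib

section
/- For an ideal $I$ of $R$ the following are equivalent: (i) for all $a \in I$ and $b \in R$, $h_Y(a) \subseteq h_Y(b)$ implies $b \in I$ (i.e. $I$ is an $\mathcal{H}_Y$-ideal); (ii) for every $a \in I$, $k(h_Y(a)) \subseteq I$; (iii) for all $a \in I$ and $b \in R$, $k(h_Y(b)) \subseteq k(h_Y(a))$ implies $b \in I$; (iv) for every $a \in I$ and every subset $S$ of $R$, $h_Y(a) \subseteq h_Y(S)$ implies $S \subseteq I$; (v) for every $a \in I$ and $b \in R$, $h_Y(a) = h_Y(b)$ implies $b \in I$. -/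
/-- `hSet Y S` is the set of primes (ideals) in `Y` containing the subset `S`. -/
def hSet {R : Type*} [CommRing R] (Y : Set (Ideal R)) (S : Set R) : Set (Ideal R) :=
  {P ∈ Y | S ⊆ (P : Set R)}

/-- `kSet 𝒮` is the intersection of the ideals in `𝒮` (the whole ring if `𝒮 = ∅`). -/
def kSet {R : Type*} [CommRing R] (𝒮 : Set (Ideal R)) : Ideal R := sInf 𝒮

/-- An `ℋ_Y`-ideal. -/
def IsHIdeal {R : Type*} [CommRing R] (Y : Set (Ideal R)) (I : Ideal R) : Prop :=
  ∀ a ∈ I, ∀ b : R, hSet Y {a} ⊆ hSet Y {b} → b ∈ I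

/-- A strong `ℋ_Y`-ideal. -/
def IsStrongHIdeal {R : Type*} [CommRing R] (Y : Set (Ideal R)) (I : Ideal R) : Prop :=
  ∀ F : Set R, F.Finite → F ⊆ (I : Set R) → ∀ b : R, hSet Y F ⊆ hSet Y {b} → b ∈ I

/-- A `Y`-Hilbert ideal. -/
def IsYHilbert {R : Type*} [CommRing R] (Y : Set (Ideal R)) (I : Ideal R) : Prop :=
  I = kSet (hSet Y (I : Set R))

lemma mem_hSet_singleton {R : Type*} [CommRing R] {Y : Set (Ideal R)} {a : R} {P : Ideal R} :
    P ∈ hSet Y {a} ↔ P ∈ Y ∧ a ∈ P := by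
  simp [hSet, Set.singleton_subset_iff, SetLike.mem_coe]

lemma mem_kSet_hSet {R : Type*} [CommRing R] {Y : Set (Ideal R)} {a b : R} :
    b ∈ kSet (hSet Y {a}) ↔ hSet Y {a} ⊆ hSet Y {b} := by
  constructor
  · intro hb P hP
    exact mem_hSet_singleton.mpr ⟨(mem_hSet_singleton.mp hP).1, Ideal.mem_sInf.mp hb hP⟩
  · intro h
    exact Ideal.mem_sInf.mpr fun P hP => (mem_hSet_singleton.mp (h hP)).2

/-- equivalent characterizations of `ℋ_Y`-ideals. -/
theorem stmt1 {R : Type*} [CommRing R] (Y : Set (Ideal R))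
    (hprime : ∀ P ∈ Y, P.IsPrime) (I : Ideal R) :
    [ (∀ a ∈ I, ∀ b : R, hSet Y {a} ⊆ hSet Y {b} → b ∈ I),
      (∀ a ∈ I, kSet (hSet Y {a}) ≤ I),
      (∀ a ∈ I, ∀ b : R, kSet (hSet Y {b}) ≤ kSet (hSet Y {a}) → b ∈ I),
      (∀ a ∈ I, ∀ S : Set R, hSet Y {a} ⊆ hSet Y S → S ⊆ (I : Set R)),
      (∀ a ∈ I, ∀ b : R, hSet Y {a} = hSet Y {b} → b ∈ I) ].TFAE := by
  tfae_have 1 → 2 := by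
    intro h1 a ha b hb
    exact h1 a ha b (mem_kSet_hSet.mp hb)
  tfae_have 2 → 3 := by
    intro h2 a ha b hb
    have hbb : b ∈ kSet (hSet Y {b}) :=
      Ideal.mem_sInf.mpr fun P hP => (mem_hSet_singleton.mp hP).2
    exact h2 a ha (hb hbb)
  tfae_have 3 → 1 := by
    intro h3 a ha b hb
    exact h3 a ha b (sInf_le_sInf hb)
  tfae_have 1 → 4 := by
    intro h1 a ha S hS s hs
    refine h1 a ha s (fun P hP => ?_)
    have := hS hP
    exact mem_hSet_singleton.mpr ⟨this.1, this.2 hs⟩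
  tfae_have 4 → 5 := by
    intro h4 a ha b hb
    exact h4 a ha {b} hb.le rfl
  tfae_have 5 → 1 := by
    intro h5 a ha b hb
    refine h5 (a * b) (I.mul_mem_right b ha) b ?_
    ext P
    simp only [mem_hSet_singleton]
    constructor
    · rintro ⟨hPY, hab⟩
      rcases ((hprime P hPY).mem_or_mem hab) with h | h
      · exact ⟨hPY, (mem_hSet_singleton.mp (hb (mem_hSet_singleton.mpr ⟨hPY, h⟩))).2⟩
      · exact ⟨hPY, h⟩
    · rintro ⟨hPY, hbP⟩
      exact ⟨hPY, P.mul_mem_left a hbP⟩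
  tfae_finish
end

section
/- Suppose $k(Y) = \langle 0 \rangle$. Then for every subset $S$ of $R$, the interior of $h_Y(S)$ in the space $Y$ equals $h_Y^c(\mathrm{Ann}(S)) = \{P \in Y : \mathrm{Ann}(S) \not\subseteq P\}$. -/
/-- if `k(Y) = ⟨0⟩`, then for every `S ⊆ R` the interior of `h_Y(S)`
in the space `Y` (with the subspace Zariski topology) is `h_Y^c(Ann S)`. -/
theorem stmt3 {R : Type*} [CommRing R] (Y : Set (PrimeSpectrum R))
    (h0 : (⨅ P ∈ Y, P.asIdeal) = ⊥) (S : Set R) :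
    interior {P : Y | S ⊆ ((P : PrimeSpectrum R).asIdeal : Set R)} =
      {P : Y | ¬ {x : R | ∀ s ∈ S, x * s = 0} ⊆
        ((P : PrimeSpectrum R).asIdeal : Set R)} := by
  set A : Set R := {x : R | ∀ s ∈ S, x * s = 0} with hA
  apply Set.Subset.antisymm
  · -- interior ⊆ RHS
    obtain ⟨U, hU, hUeq⟩ := isOpen_induced_iff.mp
      (isOpen_interior (s := {P : Y | S ⊆ ((P : PrimeSpectrum R).asIdeal : Set R)}))
    obtain ⟨t, ht⟩ := (PrimeSpectrum.isOpen_iff U).mp hU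
    intro P hP
    intro hAP
    have hPU : (P : PrimeSpectrum R) ∉ PrimeSpectrum.zeroLocus t := by
      rw [← ht]
      simp only [Set.mem_compl_iff, not_not]
      rw [← hUeq] at hP; exact hP
    rw [PrimeSpectrum.mem_zeroLocus] at hPU
    obtain ⟨x, hxt, hxP⟩ := Set.not_subset.mp hPU
    have hxA : x ∈ A := by
      intro s hs
      have : x * s ∈ (⊥ : Ideal R) := by
        rw [← h0]
        simp only [Submodule.mem_iInf]
        intro Q hQ
        by_cases hxQ : x ∈ Q.asIdeal
        · exact Q.asIdeal.mul_mem_right s hxQ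
        · have hQU : Q ∈ U := by
            have : Q ∉ PrimeSpectrum.zeroLocus t := by
              rw [PrimeSpectrum.mem_zeroLocus]
              exact fun h => hxQ (h hxt)
            rwa [← ht, Set.mem_compl_iff, not_not] at this
          have : (⟨Q, hQ⟩ : Y) ∈ interior {P : Y | S ⊆ ((P : PrimeSpectrum R).asIdeal : Set R)} := by
            rw [← hUeq]; exact hQU
          have hsQ : s ∈ Q.asIdeal := interior_subset this hs
          exact Q.asIdeal.mul_mem_left x hsQ
      simpa using this
    exact hxP (hAP hxA)
  · -- RHS ⊆ interior
    have hsub : {P : Y | ¬ A ⊆ ((P : PrimeSpectrum R).asIdeal : Set R)} ⊆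
        {P : Y | S ⊆ ((P : PrimeSpectrum R).asIdeal : Set R)} := by
      intro P hP s hs
      obtain ⟨x, hxA, hxP⟩ := Set.not_subset.mp hP
      have hmul : x * s ∈ (P : PrimeSpectrum R).asIdeal := by
        rw [hxA s hs]; exact (P : PrimeSpectrum R).asIdeal.zero_mem
      rcases ((P : PrimeSpectrum R).isPrime.mem_or_mem hmul) with h | h
      · exact absurd h hxP
      · exact h
    have hopen : IsOpen {P : Y | ¬ A ⊆ ((P : PrimeSpectrum R).asIdeal : Set R)} := by
      have : {P : Y | ¬ A ⊆ ((P : PrimeSpectrum R).asIdeal : Set R)} =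
          Subtype.val ⁻¹' (PrimeSpectrum.zeroLocus A)ᶜ := by
        ext P
        simp [PrimeSpectrum.mem_zeroLocus]
      rw [this]
      exact (PrimeSpectrum.isClosed_zeroLocus A).isOpen_compl.preimage continuous_subtype_val
    exact interior_maximal hsub hopen
end

section
/- Let $\mathrm{Min}(R)$ be the set of minimal prime ideals of $R$ and write $h_m(F) = \{P \in \mathrm{Min}(R) : F \subseteq P\}$. Then for every finite subset $F$ of $R$, $h_m(F)$ equals its own interior in the space $\mathrm{Min}(R)$; that is, $h_m(F)$ is an open subset of $\mathrm{Min}(R)$. Moreover $h_m(F) = \{P \in \mathrm{Min}(R) : (\mathrm{Rad}(R) : F) \not\subseteq P\}$, where $\mathrm{Rad}(R)$ is the intersection of all prime ideals of $R$ and $(\mathrm{Rad}(R) : F) = \{x \in R : xF \subseteq \mathrm{Rad}(R)\}$. -/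
lemma min_key {R : Type*} [CommRing R] {P : Ideal R} (hP : P ∈ minimalPrimes R)
    {f : R} (hf : f ∈ P) : ∃ s ∉ P, s * f ∈ nilradical R := by
  haveI : P.IsPrime := hP.1.1
  set S : Submonoid R := Submonoid.closure ((P : Set R)ᶜ ∪ {f}) with hS
  have hrep : ∀ x ∈ S, ∃ s ∉ P, ∃ n : ℕ, x = s * f ^ n := by
    intro x hx
    induction hx using Submonoid.closure_induction with
    | mem g hg =>
      rcases hg with hg | hg
      · exact ⟨g, hg, 0, by simp⟩
      · exact ⟨1, P.primeCompl.one_mem, 1, by simp [Set.mem_singleton_iff.mp hg]⟩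
    | one => exact ⟨1, P.primeCompl.one_mem, 0, by simp⟩
    | mul a b _ _ ha hb =>
      obtain ⟨s, hs, n, rfl⟩ := ha
      obtain ⟨t, ht, m, rfl⟩ := hb
      exact ⟨s * t, P.primeCompl.mul_mem hs ht, n + m, by ring⟩
  by_cases h0 : (0 : R) ∈ S
  · obtain ⟨s, hs, n, hsn⟩ := hrep 0 h0
    refine ⟨s, hs, ?_⟩
    rw [mem_nilradical]
    exact ⟨n + 1, by linear_combination (s ^ n * f) * hsn.symm⟩
  · exfalso
    have hdisj : Disjoint ((⊥ : Ideal R) : Set R) (S : Set R) := by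
      rw [Set.disjoint_left]
      rintro x hx
      simp only [SetLike.mem_coe, Ideal.mem_bot] at hx
      subst hx; exact h0
    obtain ⟨Q, hQprime, -, hQdisj⟩ := Ideal.exists_le_prime_disjoint _ S hdisj
    have hQP : Q ≤ P := by
      intro x hx
      by_contra hxP
      exact Set.disjoint_left.mp hQdisj hx
        (Submonoid.subset_closure (Or.inl hxP))
    have : Q = P := le_antisymm hQP (hP.2 ⟨hQprime, bot_le⟩ hQP)
    have hfQ : f ∉ Q :=
      fun h => Set.disjoint_left.mp hQdisj h (Submonoid.subset_closure (Or.inr rfl))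
    exact hfQ (this ▸ hf)

/-- for a finite `F ⊆ R`, the set `h_m(F)` is open (equals its interior)
in `Min(R)` with the subspace Zariski topology, and
`h_m(F) = {P ∈ Min(R) : (Rad R : F) ⊄ P}`. -/
theorem stmt4 {R : Type*} [CommRing R] (F : Set R) (hF : F.Finite) :
    ({P : {Q : PrimeSpectrum R // Q.asIdeal ∈ minimalPrimes R} |
        F ⊆ (P.1.asIdeal : Set R)} =
      interior {P : {Q : PrimeSpectrum R // Q.asIdeal ∈ minimalPrimes R} |
        F ⊆ (P.1.asIdeal : Set R)}) ∧
    ({P : {Q : PrimeSpectrum R // Q.asIdeal ∈ minimalPrimes R} |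
        F ⊆ (P.1.asIdeal : Set R)} =
      {P : {Q : PrimeSpectrum R // Q.asIdeal ∈ minimalPrimes R} |
        ¬ {x : R | ∀ f ∈ F, x * f ∈ nilradical R} ⊆ (P.1.asIdeal : Set R)}) := by
  set C : Set R := {x : R | ∀ f ∈ F, x * f ∈ nilradical R} with hC
  have heq : {P : {Q : PrimeSpectrum R // Q.asIdeal ∈ minimalPrimes R} |
        F ⊆ (P.1.asIdeal : Set R)} =
      {P : {Q : PrimeSpectrum R // Q.asIdeal ∈ minimalPrimes R} |
        ¬ C ⊆ (P.1.asIdeal : Set R)} := by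
    ext P
    haveI : P.1.asIdeal.IsPrime := P.2.1.1
    simp only [Set.mem_setOf_eq]
    constructor
    · intro hFP
      classical
      have hs : ∀ f ∈ hF.toFinset, ∃ s, s ∉ P.1.asIdeal ∧ s * f ∈ nilradical R := by
        intro f hf
        obtain ⟨s, hs1, hs2⟩ := min_key P.2 (hFP (hF.mem_toFinset.mp hf))
        exact ⟨s, hs1, hs2⟩
      choose! s hs1 hs2 using hs
      intro hCP
      have hx : (∏ f ∈ hF.toFinset, s f) ∈ C := by
        intro f hf
        rw [← hF.mem_toFinset] at hf
        rw [← Finset.mul_prod_erase _ _ hf, mul_comm (s f), mul_assoc]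
        exact Ideal.mul_mem_left _ _ (hs2 f hf)
      have : (∏ f ∈ hF.toFinset, s f) ∈ P.1.asIdeal := hCP hx
      rw [Ideal.IsPrime.prod_mem_iff] at this
      obtain ⟨f, hf, hfP⟩ := this
      exact hs1 f hf hfP
    · intro hCP hf hfF
      obtain ⟨x, hxC, hxP⟩ := Set.not_subset.mp hCP
      have : x * hf ∈ P.1.asIdeal := nilradical_le_prime _ (hxC hf hfF)
      rcases Ideal.IsPrime.mem_or_mem ‹_› this with h | h
      · exact absurd h hxP
      · exact h
  refine ⟨?_, heq⟩
  rw [heq]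
  have hopen : IsOpen {P : {Q : PrimeSpectrum R // Q.asIdeal ∈ minimalPrimes R} |
      ¬ C ⊆ (P.1.asIdeal : Set R)} := by
    have : {P : {Q : PrimeSpectrum R // Q.asIdeal ∈ minimalPrimes R} |
        ¬ C ⊆ (P.1.asIdeal : Set R)} =
        (Subtype.val) ⁻¹' (PrimeSpectrum.zeroLocus C)ᶜ := by
      ext P
      simp [PrimeSpectrum.mem_zeroLocus]
    rw [this]
    exact (PrimeSpectrum.isClosed_zeroLocus C).isOpen_compl.preimage continuous_subtype_val
  exact hopen.interior_eq.symm
end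

section
/- The following are equivalent: (a) $k(Y) = \mathrm{Rad}(R)$, where $\mathrm{Rad}(R)$ is the intersection of all prime ideals of $R$; (b) every $\mathcal{H}_{\mathrm{Min}(R)}$-ideal of $R$ (i.e. $z^{\circ}$-ideal) is an $\mathcal{H}_Y$-ideal; (c) every strong $\mathcal{H}_{\mathrm{Min}(R)}$-ideal of $R$ (i.e. $sz^{\circ}$-ideal) is a strong $\mathcal{H}_Y$-ideal; (d) $k(h_Y(F)) \subseteq k(h_m(F))$ for every finite subset $F$ of $R$; (e) $k(h_Y(a)) \subseteq k(h_m(a))$ for every $a \in R$. -/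
section Aux

variable {R : Type*} [CommRing R]

lemma sInf_minimalPrimes_eq_nilradical : sInf (minimalPrimes R) = nilradical R := by
  rw [minimalPrimes, Ideal.sInf_minimalPrimes]
  rfl

/-- For a minimal prime `P` and `a ∈ P`, there are `s ∉ P` and `n` with `s * a ^ n`
nilpotent. -/
lemma exists_nilpotent_of_mem_minimalPrime {P : Ideal R} (hP : P ∈ minimalPrimes R)
    {a : R} (ha : a ∈ P) : ∃ s ∉ P, ∃ n : ℕ, s * a ^ n ∈ nilradical R := by
  have hPp : P.IsPrime := hP.1.1
  by_contra h
  push_neg at h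
  set M : Submonoid R :=
    { carrier := {x | ∃ s ∉ P, ∃ n : ℕ, x = s * a ^ n}
      one_mem' := ⟨1, P.ne_top_iff_one.mp hPp.ne_top, 0, by ring⟩
      mul_mem' := by
        rintro x y ⟨s, hs, n, rfl⟩ ⟨t, ht, m, rfl⟩
        exact ⟨s * t, fun hst => ((hPp.mem_or_mem hst).elim hs ht), n + m, by ring⟩ } with hM
  have hdis : Disjoint ((nilradical R : Ideal R) : Set R) (M : Set R) := by
    rw [Set.disjoint_left]
    rintro x hx ⟨s, hs, n, rfl⟩
    exact h s hs n hx
  obtain ⟨p, hp, hnp, hpM⟩ := Ideal.exists_le_prime_disjoint (I := nilradical R) M hdis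
  have hpP : p ≤ P := by
    intro x hxp
    by_contra hxP
    exact Set.disjoint_left.mp hpM hxp ⟨x, hxP, 0, by ring⟩
  have hap : a ∉ p := fun hap =>
    Set.disjoint_left.mp hpM hap ⟨1, P.ne_top_iff_one.mp hPp.ne_top, 1, by ring⟩
  exact hap (hP.2 ⟨hp, bot_le⟩ hpP ha)

lemma mem_kSet_iff {𝒮 : Set (Ideal R)} {x : R} : x ∈ kSet 𝒮 ↔ ∀ P ∈ 𝒮, x ∈ P :=
  Submodule.mem_sInf

end Aux

/-- `k(Y) = Rad(R)` iff every `z°`-ideal is an `ℋ_Y`-ideal, iff every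
`sz°`-ideal is a strong `ℋ_Y`-ideal, iff `k(h_Y(F)) ⊆ k(h_m(F))` for finite `F`,
iff `k(h_Y(a)) ⊆ k(h_m(a))` for all `a`. -/
theorem stmt5 {R : Type*} [CommRing R] (Y : Set (Ideal R))
    (hprime : ∀ P ∈ Y, P.IsPrime) :
    [ kSet Y = nilradical R,
      (∀ I : Ideal R, IsHIdeal (minimalPrimes R) I → IsHIdeal Y I),
      (∀ I : Ideal R, IsStrongHIdeal (minimalPrimes R) I → IsStrongHIdeal Y I),
      (∀ F : Set R, F.Finite →
        kSet (hSet Y F) ≤ kSet (hSet (minimalPrimes R) F)),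
      (∀ a : R, kSet (hSet Y {a}) ≤ kSet (hSet (minimalPrimes R) {a})) ].TFAE := by
  have hnil_strong : IsStrongHIdeal (minimalPrimes R) (nilradical R) := by
    intro F hF hFsub b hb
    have : ∀ P ∈ minimalPrimes R, b ∈ P := by
      intro P hP
      have : P ∈ hSet (minimalPrimes R) F := by
        refine ⟨hP, fun f hf => ?_⟩
        have : f ∈ nilradical R := hFsub hf
        exact (nilradical_le_prime (H := hP.1.1) P) this
      exact (hb this).2 rfl
    rw [← sInf_minimalPrimes_eq_nilradical]
    exact Submodule.mem_sInf.mpr this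
  tfae_have 1 → 4 := by
    intro h1 F hF b hb
    rw [mem_kSet_iff]
    rintro P ⟨hPmin, hFP⟩
    have hPp : P.IsPrime := hPmin.1.1
    -- choose s f, n f for each f in F
    have key : ∀ f ∈ hF.toFinset, ∃ s ∉ P, ∃ n : ℕ, s * f ^ n ∈ nilradical R := by
      intro f hf
      exact exists_nilpotent_of_mem_minimalPrime hPmin (hFP (hF.mem_toFinset.mp hf))
    choose s hs n hn using key
    set t : R := ∏ f ∈ hF.toFinset.attach, s f.1 f.2 with ht
    have htP : t ∉ P := by
      intro htP
      obtain ⟨f, _, hfP⟩ := Ideal.IsPrime.prod_mem_iff.mp htP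
      exact hs f.1 f.2 hfP
    have htb : t * b ∈ kSet Y := by
      rw [mem_kSet_iff]
      intro Q hQ
      have hQp : Q.IsPrime := hprime Q hQ
      by_cases hFQ : F ⊆ (Q : Set R)
      · exact Q.mul_mem_left t ((mem_kSet_iff.mp hb) Q ⟨hQ, hFQ⟩)
      · obtain ⟨f, hfF, hfQ⟩ := Set.not_subset.mp hFQ
        have hf' : f ∈ hF.toFinset := hF.mem_toFinset.mpr hfF
        have h1' : s f hf' * f ^ (n f hf') ∈ Q := by
          have := hn f hf'
          rw [← h1] at this
          exact (mem_kSet_iff.mp this) Q hQ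
        have hsfQ : s f hf' ∈ Q := by
          rcases hQp.mem_or_mem h1' with h | h
          · exact h
          · exact absurd (hQp.mem_of_pow_mem _ h) hfQ
        have : s f hf' ∣ t := Finset.dvd_prod_of_mem _ (Finset.mem_attach _ ⟨f, hf'⟩)
        exact Q.mul_mem_right b (Ideal.mem_of_dvd Q this hsfQ)
    rw [h1] at htb
    have : t * b ∈ P := (nilradical_le_prime (H := hPp) P) htb
    rcases hPp.mem_or_mem this with h | h
    · exact absurd h htP
    · exact h
  tfae_have 4 → 5 := fun h4 a => h4 {a} (Set.finite_singleton a)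
  tfae_have 5 → 1 := by
    intro h5
    refine le_antisymm ?_ ?_
    · have := h5 0
      have hYeq : hSet Y {(0 : R)} = Y := by
        ext P; exact ⟨fun h => h.1, fun h => ⟨h, by simp [SetLike.mem_coe]⟩⟩
      have hMeq : hSet (minimalPrimes R) {(0 : R)} = minimalPrimes R := by
        ext P; exact ⟨fun h => h.1, fun h => ⟨h, by simp [SetLike.mem_coe]⟩⟩
      rw [hYeq, hMeq] at this
      calc kSet Y ≤ kSet (minimalPrimes R) := this
        _ = nilradical R := sInf_minimalPrimes_eq_nilradical
    · intro x hx
      exact Submodule.mem_sInf.mpr fun Q hQ => (nilradical_le_prime (H := hprime Q hQ) Q) hx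
  tfae_have 4 → 3 := by
    intro h4 I hI F hF hFI b hb
    have hbY : b ∈ kSet (hSet Y F) := by
      rw [mem_kSet_iff]
      intro P hP
      exact (hb hP).2 rfl
    have hbM : b ∈ kSet (hSet (minimalPrimes R) F) := h4 F hF hbY
    refine hI F hF hFI b ?_
    intro P hP
    exact ⟨hP.1, by simpa [hSet, SetLike.mem_coe] using (mem_kSet_iff.mp hbM) P hP⟩
  tfae_have 3 → 1 := by
    intro h3
    refine le_antisymm ?_ ?_
    · intro b hb
      refine h3 (nilradical R) hnil_strong ∅ Set.finite_empty (Set.empty_subset _) b ?_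
      intro P hP
      exact ⟨hP.1, by simpa [SetLike.mem_coe] using (mem_kSet_iff.mp hb) P hP.1⟩
    · intro x hx
      exact Submodule.mem_sInf.mpr fun Q hQ => (nilradical_le_prime (H := hprime Q hQ) Q) hx
  tfae_have 5 → 2 := by
    intro h5 I hI a ha b hb
    have hbY : b ∈ kSet (hSet Y {a}) := by
      rw [mem_kSet_iff]
      intro P hP
      exact (hb hP).2 rfl
    have hbM : b ∈ kSet (hSet (minimalPrimes R) {a}) := h5 a hbY
    refine hI a ha b ?_
    intro P hP
    exact ⟨hP.1, by simpa [hSet, SetLike.mem_coe] using (mem_kSet_iff.mp hbM) P hP⟩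
  tfae_have 2 → 1 := by
    intro h2
    have hnilH : IsHIdeal (minimalPrimes R) (nilradical R) := by
      intro a ha b hb
      exact hnil_strong {a} (Set.finite_singleton a) (by simpa [SetLike.mem_coe] using ha) b hb
    refine le_antisymm ?_ ?_
    · intro b hb
      refine h2 (nilradical R) hnilH 0 (by simp) b ?_
      intro P hP
      exact ⟨hP.1, by simpa [SetLike.mem_coe] using (mem_kSet_iff.mp hb) P hP.1⟩
    · intro x hx
      exact Submodule.mem_sInf.mpr fun Q hQ => (nilradical_le_prime (H := hprime Q hQ) Q) hx
  tfae_finish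
end

section
/- Let $I$ be an ideal of $R$ and let $P$ be a prime ideal minimal over $I$. If $I$ is an $\mathcal{H}_Y$-ideal, then $P$ is an $\mathcal{H}_Y$-ideal; if $I$ is a strong $\mathcal{H}_Y$-ideal, then $P$ is a strong $\mathcal{H}_Y$-ideal. -/
/-- Key lemma: if `P` is minimal over `I` and `a ∈ P`, then `c * a ^ n ∈ I` for some
`c ∉ P` and some `n`. -/
lemma exists_mul_pow_mem {R : Type*} [CommRing R] {I P : Ideal R} (hP : P.IsPrime)
    (hIP : I ≤ P) (hmin : ∀ Q : Ideal R, Q.IsPrime → I ≤ Q → Q ≤ P → Q = P)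
    {a : R} (ha : a ∈ P) : ∃ c ∉ P, ∃ n : ℕ, c * a ^ n ∈ I := by
  by_contra h
  push_neg at h
  set S : Submonoid R :=
    { carrier := {x | ∃ c ∉ P, ∃ n : ℕ, x = c * a ^ n}
      mul_mem' := by
        rintro x y ⟨c, hc, n, rfl⟩ ⟨d, hd, m, rfl⟩
        refine ⟨c * d, fun hm => ?_, n + m, by ring⟩
        rcases hP.mem_or_mem hm with h | h <;> [exact hc h; exact hd h]
      one_mem' := ⟨1, hP.ne_top ∘ (Ideal.eq_top_iff_one P).2, 0, by ring⟩ } with hS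
  have hdisj : Disjoint (I : Set R) (S : Set R) := by
    rw [Set.disjoint_left]
    rintro x hx ⟨c, hc, n, rfl⟩
    exact h c hc n hx
  obtain ⟨Q, hQ, hIQ, hQS⟩ := Ideal.exists_le_prime_disjoint I S hdisj
  have hQP : Q ≤ P := by
    intro x hx
    by_contra hxP
    exact Set.disjoint_left.1 hQS hx ⟨x, hxP, 0, by ring⟩
  rw [hmin Q hQ hIQ hQP] at hQS
  exact Set.disjoint_left.1 hQS ha
    ⟨1, fun h1 => hP.ne_top ((Ideal.eq_top_iff_one _).2 h1), 1, by ring⟩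

/-- a prime ideal minimal over a (strong) `ℋ_Y`-ideal is a (strong)
`ℋ_Y`-ideal. -/
theorem stmt7 {R : Type*} [CommRing R] (Y : Set (Ideal R))
    (hprime : ∀ P ∈ Y, P.IsPrime) (I P : Ideal R) (hP : P.IsPrime) (hIP : I ≤ P)
    (hmin : ∀ Q : Ideal R, Q.IsPrime → I ≤ Q → Q ≤ P → Q = P) :
    (IsHIdeal Y I → IsHIdeal Y P) ∧
    (IsStrongHIdeal Y I → IsStrongHIdeal Y P) := by
  constructor
  · intro hH a ha b hb
    obtain ⟨c, hc, n, hcn⟩ := exists_mul_pow_mem hP hIP hmin ha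
    have key : hSet Y {c * a ^ n} ⊆ hSet Y {c * b} := by
      rintro Q ⟨hQY, hQ⟩
      have hQp := hprime Q hQY
      refine ⟨hQY, Set.singleton_subset_iff.2 ?_⟩
      have : c * a ^ n ∈ Q := hQ (Set.mem_singleton _)
      rcases hQp.mem_or_mem this with h | h
      · exact Q.mul_mem_right b h
      · have : a ∈ Q := hQp.mem_of_pow_mem n h
        have hbQ : b ∈ Q := (hb ⟨hQY, Set.singleton_subset_iff.2 this⟩).2 (Set.mem_singleton _)
        exact Q.mul_mem_left c hbQ
    have hcb : c * b ∈ P := hIP (hH _ hcn _ key)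
    rcases hP.mem_or_mem hcb with h | h
    · exact absurd h hc
    · exact h
  · intro hH F hF hFP b hb
    classical
    choose c hc n hcn using fun (a : F) => exists_mul_pow_mem hP hIP hmin (hFP a.2)
    haveI : Fintype F := hF.fintype
    set G : Set R := Set.range (fun a : F => c a * (a : R) ^ n a) with hG
    have hGfin : G.Finite := Set.finite_range _
    have hGI : G ⊆ (I : Set R) := by rintro _ ⟨a, rfl⟩; exact hcn a
    set C : R := ∏ a : F, c a with hC
    have hCP : C ∉ P :=
      Finset.prod_induction c (· ∉ P)
        (fun x y hx hy h => by rcases hP.mem_or_mem h with h | h <;> [exact hx h; exact hy h])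
        (fun h1 => hP.ne_top ((Ideal.eq_top_iff_one _).2 h1))
        (fun a _ => hc a)
    have key : hSet Y G ⊆ hSet Y {C * b} := by
      rintro Q ⟨hQY, hQ⟩
      have hQp := hprime Q hQY
      refine ⟨hQY, Set.singleton_subset_iff.2 ?_⟩
      by_cases hFQ : F ⊆ (Q : Set R)
      · have hbQ : b ∈ Q := (hb ⟨hQY, hFQ⟩).2 (Set.mem_singleton _)
        exact Q.mul_mem_left C hbQ
      · obtain ⟨a, haF, haQ⟩ := Set.not_subset.1 hFQ
        have : c ⟨a, haF⟩ * a ^ n ⟨a, haF⟩ ∈ Q := hQ ⟨⟨a, haF⟩, rfl⟩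
        have hca : c ⟨a, haF⟩ ∈ Q := by
          rcases hQp.mem_or_mem this with h | h
          · exact h
          · exact absurd (hQp.mem_of_pow_mem _ h) haQ
        have hCQ : C ∈ Q := by
          rw [hC, ← Finset.mul_prod_erase Finset.univ c (Finset.mem_univ ⟨a, haF⟩)]
          exact Q.mul_mem_right _ hca
        exact Q.mul_mem_right b hCQ
    have hCb : C * b ∈ P := hIP (hH G hGfin hGI _ key)
    rcases hP.mem_or_mem hCb with h | h
    · exact absurd h hCP
    · exact h
end

section
/- (a) An ideal $I$ of $R$ is a strong $\mathcal{H}_Y$-ideal if and only if $I$ is an intersection of a family of prime ideals, each of which is a strong $\mathcal{H}_Y$-ideal minimal over $I$; the analogous statement holds with '$\mathcal{H}_Y$-ideal' in place of 'strong $\mathcal{H}_Y$-ideal'. (b) Every ideal that is maximal in the set of proper strong $\mathcal{H}_Y$-ideals of $R$ (ordered by inclusion) is a prime ideal, and likewise every ideal maximal in the set of proper $\mathcal{H}_Y$-ideals is prime. -/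
section Aux
variable {R : Type*} [CommRing R] {Y : Set (Ideal R)}

lemma hIdeal_radical (hprime : ∀ P ∈ Y, P.IsPrime) {I : Ideal R} (h : IsHIdeal Y I) :
    I.radical ≤ I := by
  intro x hx
  obtain ⟨n, hn⟩ := hx
  rcases Nat.eq_zero_or_pos n with rfl | hn0
  · have : I = ⊤ := (Ideal.eq_top_iff_one I).2 (by simpa using hn)
    simp [this]
  · refine h (x ^ n) hn x fun Q hQ => ⟨hQ.1, ?_⟩
    have := (hprime Q hQ.1).mem_of_pow_mem n (hQ.2 (Set.mem_singleton _))
    simpa using this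

lemma minimal_mul_pow {I P : Ideal R} (hP : P ∈ I.minimalPrimes) {a : R} (ha : a ∈ P) :
    ∃ c ∉ P, ∃ n : ℕ, c * a ^ n ∈ I := by
  by_contra hcon
  push_neg at hcon
  have hPp : P.IsPrime := hP.1.1
  have h1P : (1 : R) ∉ P := fun h1 => hPp.ne_top ((Ideal.eq_top_iff_one P).2 h1)
  let S : Submonoid R :=
  { carrier := {x | ∃ c ∉ (P : Set R), ∃ n : ℕ, c * a ^ n = x}
    one_mem' := ⟨1, h1P, 0, by simp⟩
    mul_mem' := by
      rintro x y ⟨c, hc, n, rfl⟩ ⟨d, hd, m, rfl⟩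
      exact ⟨c * d, fun h => ((hPp.mem_or_mem h).elim hc hd), n + m, by ring⟩ }
  have hdisj : Disjoint (I : Set R) (S : Set R) := by
    rw [Set.disjoint_left]
    rintro x hx ⟨c, hc, n, rfl⟩
    exact hcon c hc n hx
  obtain ⟨Q, hQp, hIQ, hQS⟩ := Ideal.exists_le_prime_disjoint I S hdisj
  have hQP : Q ≤ P := by
    intro x hx
    by_contra hxP
    exact (Set.disjoint_left.mp hQS hx) ⟨x, hxP, 0, by simp⟩
  have hPQ : P ≤ Q := hP.2 ⟨hQp, hIQ⟩ hQP
  exact (Set.disjoint_left.mp hQS (hPQ ha)) ⟨1, h1P, 1, by simp⟩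

lemma key_aux {I P : Ideal R} (hP : P ∈ I.minimalPrimes) :
    ∀ F : Set R, F.Finite → F ⊆ (P : Set R) → ∃ c ∉ P, ∃ G : Set R, G.Finite ∧
      G ⊆ (I : Set R) ∧ ∀ Q : Ideal R, Q.IsPrime → G ⊆ (Q : Set R) →
        F ⊆ (Q : Set R) ∨ c ∈ Q := by
  have hPp : P.IsPrime := hP.1.1
  have h1P : (1 : R) ∉ P := fun h1 => hPp.ne_top ((Ideal.eq_top_iff_one P).2 h1)
  intro F hF
  refine Set.Finite.induction_on (motive := fun F _ => F ⊆ (P : Set R) → ∃ c ∉ P, ∃ G : Set R,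
      G.Finite ∧ G ⊆ (I : Set R) ∧ ∀ Q : Ideal R, Q.IsPrime → G ⊆ (Q : Set R) →
        F ⊆ (Q : Set R) ∨ c ∈ Q) F hF
    (fun _ => ⟨1, h1P, ∅, Set.finite_empty, Set.empty_subset _,
      fun Q _ _ => Or.inl (Set.empty_subset _)⟩) ?_
  intro a F' haF' hF' ih hsub
  rw [Set.insert_subset_iff] at hsub
  obtain ⟨c, hc, G, hGfin, hGI, hG⟩ := ih hsub.2
  obtain ⟨d, hd, n, hdn⟩ := minimal_mul_pow hP hsub.1
  refine ⟨c * d, fun h => ((hPp.mem_or_mem h).elim hc hd),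
    insert (d * a ^ n) G, hGfin.insert _, ?_, ?_⟩
  · rw [Set.insert_subset_iff]; exact ⟨hdn, hGI⟩
  · intro Q hQ hGQ
    rw [Set.insert_subset_iff] at hGQ
    rcases hG Q hQ hGQ.2 with hFQ | hcQ
    · rcases hQ.mem_or_mem hGQ.1 with hdQ | haQ
      · exact Or.inr (Q.mul_mem_left c hdQ)
      · exact Or.inl (Set.insert_subset (hQ.mem_of_pow_mem n haQ) hFQ)
    · exact Or.inr (Q.mul_mem_right d hcQ)

lemma strong_minimal (hprime : ∀ P ∈ Y, P.IsPrime) {I P : Ideal R}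
    (hI : IsStrongHIdeal Y I) (hP : P ∈ I.minimalPrimes) : IsStrongHIdeal Y P := by
  intro F hF hFP b hb
  obtain ⟨c, hc, G, hGfin, hGI, hG⟩ := key_aux hP F hF hFP
  have hcb : c * b ∈ I := by
    refine hI G hGfin hGI (c * b) fun Q hQ => ⟨hQ.1, ?_⟩
    rcases hG Q (hprime Q hQ.1) hQ.2 with hFQ | hcQ
    · have hbQ : b ∈ Q := by simpa using (hb ⟨hQ.1, hFQ⟩).2
      simpa using Q.mul_mem_left c hbQ
    · simpa using Q.mul_mem_right b hcQ
  exact (hP.1.1.mem_or_mem (hP.1.2 hcb)).resolve_left hc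

lemma h_minimal (hprime : ∀ P ∈ Y, P.IsPrime) {I P : Ideal R}
    (hI : IsHIdeal Y I) (hP : P ∈ I.minimalPrimes) : IsHIdeal Y P := by
  intro a ha b hb
  obtain ⟨c, hc, n, hdn⟩ := minimal_mul_pow hP ha
  have hcb : c * b ∈ I := by
    refine hI (c * a ^ n) hdn (c * b) fun Q hQ => ⟨hQ.1, ?_⟩
    have hm : c * a ^ n ∈ Q := by simpa using hQ.2
    rcases (hprime Q hQ.1).mem_or_mem hm with hcQ | haQ
    · simpa using Q.mul_mem_right b hcQ
    · have hbQ : b ∈ Q := by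
        simpa using (hb ⟨hQ.1, by simpa using (hprime Q hQ.1).mem_of_pow_mem n haQ⟩).2
      simpa using Q.mul_mem_left c hbQ
  exact (hP.1.1.mem_or_mem (hP.1.2 hcb)).resolve_left hc

end Aux


/-- (a) an ideal is a (strong) `ℋ_Y`-ideal iff it is an intersection of
prime (strong) `ℋ_Y`-ideals minimal over it; (b) maximal elements among proper
(strong) `ℋ_Y`-ideals are prime. -/
theorem stmt8 {R : Type*} [CommRing R] (Y : Set (Ideal R))
    (hprime : ∀ P ∈ Y, P.IsPrime) :
    (∀ I : Ideal R, IsStrongHIdeal Y I ↔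
      ∃ Ps : Set (Ideal R),
        (∀ P ∈ Ps, P.IsPrime ∧ IsStrongHIdeal Y P ∧ I ≤ P ∧
          ∀ Q : Ideal R, Q.IsPrime → I ≤ Q → Q ≤ P → Q = P) ∧
        I = sInf Ps) ∧
    (∀ I : Ideal R, IsHIdeal Y I ↔
      ∃ Ps : Set (Ideal R),
        (∀ P ∈ Ps, P.IsPrime ∧ IsHIdeal Y P ∧ I ≤ P ∧
          ∀ Q : Ideal R, Q.IsPrime → I ≤ Q → Q ≤ P → Q = P) ∧
        I = sInf Ps) ∧
    (∀ I : Ideal R, I ≠ ⊤ → IsStrongHIdeal Y I →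
      (∀ J : Ideal R, J ≠ ⊤ → IsStrongHIdeal Y J → I ≤ J → I = J) → I.IsPrime) ∧
    (∀ I : Ideal R, I ≠ ⊤ → IsHIdeal Y I →
      (∀ J : Ideal R, J ≠ ⊤ → IsHIdeal Y J → I ≤ J → I = J) → I.IsPrime) := by
  have strongH : ∀ I : Ideal R, IsStrongHIdeal Y I → IsHIdeal Y I := by
    intro I h a ha b hb
    exact h {a} (Set.finite_singleton a) (by simpa using ha) b hb
  have radeq : ∀ I : Ideal R, IsHIdeal Y I → I.radical = I := fun I h =>
    le_antisymm (hIdeal_radical hprime h) Ideal.le_radical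
  have minimality : ∀ (I : Ideal R), ∀ P ∈ I.minimalPrimes,
      I ≤ P ∧ ∀ Q : Ideal R, Q.IsPrime → I ≤ Q → Q ≤ P → Q = P := by
    intro I P hP
    exact ⟨hP.1.2, fun Q hQ hIQ hQP => le_antisymm hQP (hP.2 ⟨hQ, hIQ⟩ hQP)⟩
  refine ⟨?_, ?_, ?_, ?_⟩
  · intro I
    constructor
    · intro hI
      refine ⟨I.minimalPrimes, fun P hP => ⟨hP.1.1, strong_minimal hprime hI hP,
        (minimality I P hP).1, (minimality I P hP).2⟩, ?_⟩
      rw [Ideal.sInf_minimalPrimes, radeq I (strongH I hI)]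
    · rintro ⟨Ps, hPs, rfl⟩
      intro F hF hFI b hb
      rw [Ideal.mem_sInf]
      intro P hP
      exact (hPs P hP).2.1 F hF (fun x hx => (sInf_le hP : sInf Ps ≤ P) (hFI hx)) b hb
  · intro I
    constructor
    · intro hI
      refine ⟨I.minimalPrimes, fun P hP => ⟨hP.1.1, h_minimal hprime hI hP,
        (minimality I P hP).1, (minimality I P hP).2⟩, ?_⟩
      rw [Ideal.sInf_minimalPrimes, radeq I hI]
    · rintro ⟨Ps, hPs, rfl⟩
      intro a ha b hb
      rw [Ideal.mem_sInf]
      intro P hP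
      exact (hPs P hP).2.1 a ((sInf_le hP : sInf Ps ≤ P) ha) b hb
  · intro I hne hI hmax
    obtain ⟨m, hm, hIm⟩ := Ideal.exists_le_maximal I hne
    obtain ⟨p, hp, _⟩ := Ideal.exists_minimalPrimes_le (J := m) hIm
    have : I = p := hmax p hp.1.1.ne_top (strong_minimal hprime hI hp) hp.1.2
    rw [this]; exact hp.1.1
  · intro I hne hI hmax
    obtain ⟨m, hm, hIm⟩ := Ideal.exists_le_maximal I hne
    obtain ⟨p, hp, _⟩ := Ideal.exists_minimalPrimes_le (J := m) hIm
    have : I = p := hmax p hp.1.1.ne_top (h_minimal hprime hI hp) hp.1.2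
    rw [this]; exact hp.1.1
end

section
/- Let $\mathscr{F}$ be an $\mathcal{H}_Y$-filter. Then the set $\mathcal{H}_Y^{-1}(\mathscr{F}) = \{a \in R : h_Y(a) \in \mathscr{F}\}$ is a strong $\mathcal{H}_Y$-ideal of $R$. Moreover, for every finite subset $F$ of $R$: $h_Y(F) \in \mathscr{F}$ if and only if $F \subseteq \mathcal{H}_Y^{-1}(\mathscr{F})$. -/
/-- for an `ℋ_Y`-filter `F`, the set `ℋ_Y⁻¹(F) = {a : h_Y(a) ∈ F}`
is (the underlying set of) a strong `ℋ_Y`-ideal, and for every finite `F' ⊆ R`,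
`h_Y(F') ∈ F` iff `F' ⊆ ℋ_Y⁻¹(F)`. -/
theorem stmt9 {R : Type*} [CommRing R] (Y : Set (Ideal R))
    (hprime : ∀ P ∈ Y, P.IsPrime)
    (Fil : Set (Set (Ideal R)))
    (hsub : ∀ A ∈ Fil, ∃ F : Set R, F.Finite ∧ A = hSet Y F)
    (hne : Fil.Nonempty)
    (hinter : ∀ A ∈ Fil, ∀ B ∈ Fil, A ∩ B ∈ Fil)
    (hup : ∀ A ∈ Fil, ∀ B : Set (Ideal R),
      (∃ G : Set R, G.Finite ∧ B = hSet Y G) → A ⊆ B → B ∈ Fil) :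
    (∃ I : Ideal R, (I : Set R) = {a : R | hSet Y {a} ∈ Fil} ∧
      IsStrongHIdeal Y I) ∧
    (∀ F : Set R, F.Finite →
      (hSet Y F ∈ Fil ↔ F ⊆ {a : R | hSet Y {a} ∈ Fil})) := by
  have hmono : ∀ {S T : Set R}, S ⊆ T → hSet Y T ⊆ hSet Y S :=
    fun hST P hP => ⟨hP.1, fun x hx => hP.2 (hST hx)⟩
  obtain ⟨A, hA⟩ := hne
  have hYfil : hSet Y (∅ : Set R) ∈ Fil := by
    apply hup A hA _ ⟨∅, Set.finite_empty, rfl⟩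
    obtain ⟨F, hF, rfl⟩ := hsub A hA
    intro P hP; exact ⟨hP.1, by simp⟩
  have key : ∀ F : Set R, F.Finite → F ⊆ {a : R | hSet Y {a} ∈ Fil} →
      hSet Y F ∈ Fil := by
    intro F hF
    refine Set.Finite.induction_on (motive := fun s _ => s ⊆ {a : R | hSet Y {a} ∈ Fil} →
      hSet Y s ∈ Fil) F hF (fun _ => hYfil) ?_
    intro a s ha hs ih hsub'
    have h1 : hSet Y {a} ∈ Fil := hsub' (Set.mem_insert a s)
    have h2 : hSet Y s ∈ Fil := ih (fun x hx => hsub' (Set.mem_insert_of_mem a hx))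
    have heq : hSet Y {a} ∩ hSet Y s = hSet Y (insert a s) := by
      ext P
      simp only [hSet, Set.mem_inter_iff, Set.mem_setOf_eq, Set.insert_subset_iff,
        Set.singleton_subset_iff]
      tauto
    rw [← heq]; exact hinter _ h1 _ h2
  have mem_up : ∀ (S : Set R), hSet Y S ∈ Fil → ∀ b : R,
      hSet Y S ⊆ hSet Y {b} → hSet Y {b} ∈ Fil :=
    fun S hmem b hsub' => hup _ hmem _ ⟨{b}, Set.finite_singleton b, rfl⟩ hsub'
  constructor
  · refine ⟨{ carrier := {a : R | hSet Y {a} ∈ Fil}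
              add_mem' := ?_
              zero_mem' := ?_
              smul_mem' := ?_ }, rfl, ?_⟩
    · intro a b ha hb
      have h := hinter _ ha _ hb
      have heq : hSet Y {a} ∩ hSet Y {b} = hSet Y ({a, b} : Set R) := by
        ext P
        simp only [hSet, Set.mem_inter_iff, Set.mem_setOf_eq, Set.insert_subset_iff,
          Set.singleton_subset_iff]
        tauto
      rw [heq] at h
      exact mem_up _ h (a + b) (fun P hP =>
        ⟨hP.1, by
          have h1 : a ∈ P := hP.2 (by simp)
          have h2 : b ∈ P := hP.2 (by simp)
          simpa using P.add_mem h1 h2⟩)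
    · exact mem_up _ hYfil 0 (fun P hP => ⟨hP.1, by simpa using P.zero_mem⟩)
    · intro r a ha
      refine mem_up _ ha (r • a) (fun P hP => ⟨hP.1, ?_⟩)
      have h1 : a ∈ P := hP.2 (by simp)
      simpa [smul_eq_mul] using P.mul_mem_left r h1
    · intro F hF hFsub b hb
      exact mem_up _ (key F hF hFsub) b hb
  · intro F hF
    constructor
    · intro h a haF
      exact mem_up _ h a (hmono (Set.singleton_subset_iff.mpr haF))
    · exact key F hF
end

section
/- For any ideal $I$ of $R$, the set $I_{S\mathcal{H}} = \{a \in R : h_Y(F) \subseteq h_Y(a) \text{ for some finite subset } F \text{ of } I\}$ is the smallest strong $\mathcal{H}_Y$-ideal of $R$ containing $I$; moreover $I_{S\mathcal{H}} = \bigcup_F k(h_Y(F))$, where the union ranges over all finite subsets $F$ of $I$. -/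
/-- `I_{Sℋ} = {a : h_Y(F) ⊆ h_Y(a) for some finite F ⊆ I}` is the
smallest strong `ℋ_Y`-ideal containing `I`, and it equals the union of the ideals
`k(h_Y(F))` over all finite `F ⊆ I`. -/
theorem stmt10 {R : Type*} [CommRing R] (Y : Set (Ideal R))
    (hprime : ∀ P ∈ Y, P.IsPrime) (I : Ideal R) :
    ∃ J : Ideal R,
      (J : Set R) =
        {a : R | ∃ F : Set R, F.Finite ∧ F ⊆ (I : Set R) ∧ hSet Y F ⊆ hSet Y {a}} ∧
      IsStrongHIdeal Y J ∧ I ≤ J ∧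
      (∀ K : Ideal R, IsStrongHIdeal Y K → I ≤ K → J ≤ K) ∧
      (J : Set R) =
        ⋃ F ∈ {F : Set R | F.Finite ∧ F ⊆ (I : Set R)}, (kSet (hSet Y F) : Set R) := by
  classical
  -- key equivalence
  have key : ∀ (F : Set R) (a : R),
      hSet Y F ⊆ hSet Y {a} ↔ a ∈ kSet (hSet Y F) := by
    intro F a
    constructor
    · intro h
      rw [kSet, Ideal.mem_sInf]
      intro P hP
      exact (h hP).2 rfl
    · intro h P hP
      refine ⟨hP.1, ?_⟩
      intro x hx
      rw [Set.mem_singleton_iff] at hx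
      subst hx
      exact (Ideal.mem_sInf.mp h) hP
  set T : Set R :=
    {a : R | ∃ F : Set R, F.Finite ∧ F ⊆ (I : Set R) ∧ hSet Y F ⊆ hSet Y {a}} with hT
  have hmono : ∀ (F G : Set R), F ⊆ G → hSet Y G ⊆ hSet Y F := by
    intro F G hFG P hP
    exact ⟨hP.1, hFG.trans hP.2⟩
  have hzero : (0 : R) ∈ T := by
    refine ⟨∅, Set.finite_empty, Set.empty_subset _, ?_⟩
    intro P hP
    refine ⟨hP.1, ?_⟩
    intro x hx
    rw [Set.mem_singleton_iff] at hx
    subst hx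
    exact P.zero_mem
  have hadd : ∀ a b, a ∈ T → b ∈ T → a + b ∈ T := by
    rintro a b ⟨F, hFfin, hFI, hFa⟩ ⟨G, hGfin, hGI, hGb⟩
    refine ⟨F ∪ G, hFfin.union hGfin, Set.union_subset hFI hGI, ?_⟩
    rw [key] at hFa hGb ⊢
    exact Ideal.add_mem _
      (Ideal.mem_sInf.mpr fun {P} hP => Ideal.mem_sInf.mp hFa
        (hmono F (F ∪ G) Set.subset_union_left hP))
      (Ideal.mem_sInf.mpr fun {P} hP => Ideal.mem_sInf.mp hGb
        (hmono G (F ∪ G) Set.subset_union_right hP))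
  have hsmul : ∀ (c a : R), a ∈ T → c * a ∈ T := by
    rintro c a ⟨F, hFfin, hFI, hFa⟩
    refine ⟨F, hFfin, hFI, ?_⟩
    rw [key] at hFa ⊢
    exact Ideal.mul_mem_left _ _ hFa
  let J : Ideal R :=
    { carrier := T
      zero_mem' := hzero
      add_mem' := fun ha hb => hadd _ _ ha hb
      smul_mem' := fun c a ha => hsmul c a ha }
  have hJ : (J : Set R) = T := rfl
  refine ⟨J, hJ, ?_, ?_, ?_, ?_⟩
  · -- strong H-ideal
    intro F hFfin hFJ b hb
    -- for each f ∈ F choose a finite witness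
    choose G hGfin hGI hG using fun f (hf : f ∈ F) => (hFJ hf : f ∈ T)
    refine ⟨⋃ f ∈ F, ⋃ (hf : f ∈ F), G f hf, ?_, ?_, ?_⟩
    · exact hFfin.biUnion fun f hf => Set.finite_iUnion fun hf' => hGfin f hf'
    · intro x hx
      simp only [Set.mem_iUnion] at hx
      obtain ⟨f, hf, hf', hx⟩ := hx
      exact hGI f hf' hx
    · intro P hP
      apply hb
      refine ⟨hP.1, ?_⟩
      intro f hf
      have : hSet Y (G f hf) ⊆ hSet Y {f} := hG f hf
      have hsub : G f hf ⊆ ⋃ f ∈ F, ⋃ (hf : f ∈ F), G f hf := by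
        intro x hx
        simp only [Set.mem_iUnion]
        exact ⟨f, hf, hf, hx⟩
      exact (this ⟨hP.1, hsub.trans hP.2⟩).2 rfl
  · -- I ≤ J
    intro a ha
    exact ⟨{a}, Set.finite_singleton a, Set.singleton_subset_iff.mpr ha,
      Set.Subset.rfl⟩
  · -- minimality
    intro K hK hIK a ha
    obtain ⟨F, hFfin, hFI, hFa⟩ := ha
    exact hK F hFfin (hFI.trans hIK) a hFa
  · -- union description
    ext a
    simp only [hJ, Set.mem_iUnion, Set.mem_setOf_eq, SetLike.mem_coe]
    constructor
    · rintro ⟨F, hFfin, hFI, hFa⟩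
      exact ⟨F, ⟨hFfin, hFI⟩, (key F a).mp hFa⟩
    · rintro ⟨F, ⟨hFfin, hFI⟩, ha⟩
      exact ⟨F, hFfin, hFI, (key F a).mpr ha⟩
end

section
/- If $J$ is a strong $\mathcal{H}_Y$-ideal of $R$, then for every ideal $I$ of $R$ the ideal quotient $(J : I) = \{x \in R : xI \subseteq J\}$ is a strong $\mathcal{H}_Y$-ideal. Likewise, if $J$ is an $\mathcal{H}_Y$-ideal then $(J : I)$ is an $\mathcal{H}_Y$-ideal, and if $J$ is a $Y$-Hilbert ideal then $(J : I)$ is a $Y$-Hilbert ideal. -/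
/-- ideal quotients of (strong) `ℋ_Y`-ideals / `Y`-Hilbert ideals are
again such. Here `J.colon I = {x : R | x • I ⊆ J}`. -/
theorem stmt12 {R : Type*} [CommRing R] (Y : Set (Ideal R))
    (hprime : ∀ P ∈ Y, P.IsPrime) (J I : Ideal R) :
    (IsStrongHIdeal Y J → IsStrongHIdeal Y (J.colon I)) ∧
    (IsHIdeal Y J → IsHIdeal Y (J.colon I)) ∧
    (IsYHilbert Y J → IsYHilbert Y (J.colon I)) := by
  have mem_h : ∀ (S : Set R) (P : Ideal R), P ∈ hSet Y S ↔ P ∈ Y ∧ S ⊆ (P : Set R) := by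
    intro S P; rfl
  have mem_colon : ∀ x : R, x ∈ J.colon I ↔ ∀ i ∈ I, x * i ∈ J := by
    intro x
    rw [Submodule.mem_colon]
    simp [smul_eq_mul]
  refine ⟨?_, ?_, ?_⟩
  · intro hJ F hFfin hFsub b hb
    rw [mem_colon]
    intro i hi
    apply hJ ((· * i) '' F) (hFfin.image _)
    · rintro _ ⟨f, hf, rfl⟩
      exact (mem_colon f).mp (hFsub hf) i hi
    · intro P hP
      rcases (mem_h _ P).mp hP with ⟨hPY, hPsub⟩
      refine (mem_h _ P).mpr ⟨hPY, ?_⟩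
      rintro _ rfl
      by_cases hiP : i ∈ P
      · exact P.mul_mem_left b hiP
      · have hFP : P ∈ hSet Y F := by
          refine (mem_h _ P).mpr ⟨hPY, ?_⟩
          intro f hf
          have : f * i ∈ P := hPsub ⟨f, hf, rfl⟩
          rcases (hprime P hPY).mem_or_mem this with h | h
          · exact h
          · exact absurd h hiP
        have hbP : b ∈ P := ((mem_h _ P).mp (hb hFP)).2 rfl
        exact P.mul_mem_right i hbP
  · intro hJ a ha b hb
    rw [mem_colon]
    intro i hi
    apply hJ (a * i) ((mem_colon a).mp ha i hi)
    intro P hP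
    rcases (mem_h _ P).mp hP with ⟨hPY, hPsub⟩
    refine (mem_h _ P).mpr ⟨hPY, ?_⟩
    rintro _ rfl
    have : a * i ∈ P := hPsub rfl
    by_cases hiP : i ∈ P
    · exact P.mul_mem_left b hiP
    · rcases (hprime P hPY).mem_or_mem this with h | h
      · have haP : P ∈ hSet Y {a} := (mem_h _ P).mpr ⟨hPY, by rintro _ rfl; exact h⟩
        have hbP : b ∈ P := ((mem_h _ P).mp (hb haP)).2 rfl
        exact P.mul_mem_right i hbP
      · exact absurd h hiP
  · intro hJ
    apply le_antisymm
    · intro x hx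
      rw [kSet, Submodule.mem_sInf]
      intro P hP
      exact ((mem_h _ P).mp hP).2 hx
    · intro b hb
      rw [kSet, Submodule.mem_sInf] at hb
      rw [mem_colon]
      intro i hi
      rw [hJ, kSet, Submodule.mem_sInf]
      intro P hP
      rcases (mem_h _ P).mp hP with ⟨hPY, hPsub⟩
      by_cases hiP : i ∈ P
      · exact Ideal.mul_mem_left P b hiP
      · have hcol : P ∈ hSet Y ((J.colon I : Ideal R) : Set R) := by
          refine (mem_h _ P).mpr ⟨hPY, ?_⟩
          intro x hx
          have : x * i ∈ J := (mem_colon x).mp hx i hi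
          rcases (hprime P hPY).mem_or_mem (hPsub this) with h | h
          · exact h
          · exact absurd h hiP
        exact Ideal.mul_mem_right i P (hb P hcol)
end

section
/- Let $A$ be a multiplicatively closed subset of $R$ and $I$ an ideal of $R$ with $A \cap I = \emptyset$. If $I$ is a strong $\mathcal{H}_Y$-ideal, then the ideal $I_A = \{r \in R : ra \in I \text{ for some } a \in A\}$ is a proper strong $\mathcal{H}_Y$-ideal of $R$; likewise, if $I$ is an $\mathcal{H}_Y$-ideal then $I_A$ is a proper $\mathcal{H}_Y$-ideal. -/
open Classical in
/-- The saturation of `I` by `A` as an ideal. -/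
def satIdeal {R : Type*} [CommRing R] (A : Set R)
    (hone : (1 : R) ∈ A) (hmul : ∀ a ∈ A, ∀ b ∈ A, a * b ∈ A) (I : Ideal R) : Ideal R where
  carrier := {r : R | ∃ a ∈ A, r * a ∈ I}
  zero_mem' := ⟨1, hone, by simp⟩
  add_mem' := by
    rintro x y ⟨a, ha, hxa⟩ ⟨b, hb, hyb⟩
    refine ⟨a * b, hmul a ha b hb, ?_⟩
    have : (x + y) * (a * b) = (x * a) * b + (y * b) * a := by ring
    rw [this]
    exact I.add_mem (I.mul_mem_right _ hxa) (I.mul_mem_right _ hyb)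
  smul_mem' := by
    rintro c x ⟨a, ha, hxa⟩
    refine ⟨a, ha, ?_⟩
    have : (c • x) * a = c * (x * a) := by rw [smul_eq_mul]; ring
    rw [this]
    exact I.mul_mem_left _ hxa

lemma satIdeal_ne_top {R : Type*} [CommRing R] (A : Set R)
    (hone : (1 : R) ∈ A) (hmul : ∀ a ∈ A, ∀ b ∈ A, a * b ∈ A) (I : Ideal R)
    (hdisj : ∀ a ∈ A, a ∉ I) : satIdeal A hone hmul I ≠ ⊤ := by
  intro h
  have h1 : (1 : R) ∈ satIdeal A hone hmul I := h ▸ Submodule.mem_top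
  obtain ⟨a, ha, hai⟩ := h1
  rw [one_mul] at hai
  exact hdisj a ha hai

/-- for a multiplicatively closed `A` disjoint from a (strong)
`ℋ_Y`-ideal `I`, the saturation `I_A = {r : ra ∈ I for some a ∈ A}` is a proper
(strong) `ℋ_Y`-ideal. -/
theorem stmt13 {R : Type*} [CommRing R] (Y : Set (Ideal R))
    (hprime : ∀ P ∈ Y, P.IsPrime) (A : Set R)
    (hone : (1 : R) ∈ A) (hmul : ∀ a ∈ A, ∀ b ∈ A, a * b ∈ A)
    (I : Ideal R) (hdisj : ∀ a ∈ A, a ∉ I) :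
    (IsStrongHIdeal Y I → ∃ K : Ideal R,
      (K : Set R) = {r : R | ∃ a ∈ A, r * a ∈ I} ∧ K ≠ ⊤ ∧ IsStrongHIdeal Y K) ∧
    (IsHIdeal Y I → ∃ K : Ideal R,
      (K : Set R) = {r : R | ∃ a ∈ A, r * a ∈ I} ∧ K ≠ ⊤ ∧ IsHIdeal Y K) := by
  classical
  constructor
  · intro hI
    refine ⟨satIdeal A hone hmul I, rfl, satIdeal_ne_top A hone hmul I hdisj, ?_⟩
    intro F hF hFK b hb
    -- choose witnesses
    have hw : ∀ f ∈ F, ∃ a ∈ A, f * a ∈ I := fun f hf => hFK hf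
    set g : R → R := fun f => if h : ∃ a ∈ A, f * a ∈ I then h.choose else 1 with hg
    have hgA : ∀ f, g f ∈ A := by
      intro f
      by_cases h : ∃ a ∈ A, f * a ∈ I
      · simp only [hg, dif_pos h]; exact h.choose_spec.1
      · simp only [hg, dif_neg h]; exact hone
    have hgI : ∀ f ∈ F, f * g f ∈ I := by
      intro f hf
      have h := hw f hf
      simp only [hg, dif_pos h]
      exact h.choose_spec.2
    set a : R := ∏ f ∈ hF.toFinset, g f with ha
    have haA : a ∈ A :=
      Finset.prod_induction g (· ∈ A) (fun x y hx hy => hmul x hx y hy) hone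
        (fun f _ => hgA f)
    have hfa : ∀ f ∈ F, f * a ∈ I := by
      intro f hf
      have hf' : f ∈ hF.toFinset := hF.mem_toFinset.mpr hf
      rw [ha, ← Finset.mul_prod_erase _ _ hf', ← mul_assoc]
      exact I.mul_mem_right _ (hgI f hf)
    set F' : Set R := (fun f => f * a) '' F with hF'
    have hF'fin : F'.Finite := hF.image _
    have hF'I : F' ⊆ (I : Set R) := by
      rintro _ ⟨f, hf, rfl⟩
      exact hfa f hf
    have hsub : hSet Y F' ⊆ hSet Y {b * a} := by
      rintro P ⟨hPY, hP⟩
      have hPp := hprime P hPY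
      refine ⟨hPY, Set.singleton_subset_iff.mpr ?_⟩
      by_cases haP : a ∈ P
      · exact P.mul_mem_left b haP
      · have hFP : F ⊆ (P : Set R) := by
          intro f hf
          have : f * a ∈ P := hP ⟨f, hf, rfl⟩
          rcases hPp.mem_or_mem this with h | h
          · exact h
          · exact absurd h haP
        have : P ∈ hSet Y {b} := hb ⟨hPY, hFP⟩
        exact P.mul_mem_right a (Set.singleton_subset_iff.mp this.2)
    have : b * a ∈ I := hI F' hF'fin hF'I (b * a) hsub
    exact ⟨a, haA, this⟩
  · intro hI
    refine ⟨satIdeal A hone hmul I, rfl, satIdeal_ne_top A hone hmul I hdisj, ?_⟩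
    rintro x ⟨c, hc, hxc⟩ b hb
    have hsub : hSet Y {x * c} ⊆ hSet Y {b * c} := by
      rintro P ⟨hPY, hP⟩
      have hPp := hprime P hPY
      refine ⟨hPY, Set.singleton_subset_iff.mpr ?_⟩
      rcases hPp.mem_or_mem (Set.singleton_subset_iff.mp hP) with h | h
      · have : P ∈ hSet Y {b} := hb ⟨hPY, Set.singleton_subset_iff.mpr h⟩
        exact P.mul_mem_right c (Set.singleton_subset_iff.mp this.2)
      · exact P.mul_mem_left b h
    have : b * c ∈ I := hI (x * c) hxc (b * c) hsub
    exact ⟨c, hc, this⟩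
end

section
/- Every finitely generated strong $\mathcal{H}_Y$-ideal of $R$ is a $Y$-Hilbert ideal. Moreover, for every $a \in R$ the following are equivalent: (i) the principal ideal $\langle a \rangle$ is an $\mathcal{H}_Y$-ideal; (ii) $\langle a \rangle$ is a strong $\mathcal{H}_Y$-ideal; (iii) $\langle a \rangle$ is a $Y$-Hilbert ideal. -/
lemma fg_strong_hilbert {R : Type*} [CommRing R] (Y : Set (Ideal R))
    (I : Ideal R) (hfg : I.FG) (hs : IsStrongHIdeal Y I) : IsYHilbert Y I := by
  obtain ⟨s, hspan⟩ := hfg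
  apply le_antisymm
  · intro x hx
    simp only [kSet, Submodule.mem_sInf]
    intro P hP
    exact hP.2 hx
  · intro b hb
    refine hs (s : Set R) s.finite_toSet ?_ b ?_
    · rw [← hspan]; exact Ideal.subset_span
    · rintro P ⟨hPY, hPs⟩
      refine ⟨hPY, ?_⟩
      have hIP : I ≤ P := by rw [← hspan]; exact Ideal.span_le.mpr hPs
      simp only [kSet, Submodule.mem_sInf] at hb
      exact Set.singleton_subset_iff.mpr (hb P ⟨hPY, hIP⟩)

lemma hilbert_strong {R : Type*} [CommRing R] (Y : Set (Ideal R))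
    (I : Ideal R) (hh : IsYHilbert Y I) : IsStrongHIdeal Y I := by
  intro F _ hFI b hb
  rw [hh]
  simp only [kSet, Submodule.mem_sInf]
  intro P hP
  have : P ∈ hSet Y F := ⟨hP.1, hFI.trans hP.2⟩
  exact Set.singleton_subset_iff.mp (hb this).2

/-- every finitely generated strong `ℋ_Y`-ideal is a `Y`-Hilbert
ideal; and for a principal ideal the notions `ℋ_Y`-ideal, strong `ℋ_Y`-ideal and
`Y`-Hilbert ideal are equivalent. -/
theorem stmt14 {R : Type*} [CommRing R] (Y : Set (Ideal R))
    (hprime : ∀ P ∈ Y, P.IsPrime) :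
    (∀ I : Ideal R, I.FG → IsStrongHIdeal Y I → IsYHilbert Y I) ∧
    (∀ a : R,
      [ IsHIdeal Y (Ideal.span {a}),
        IsStrongHIdeal Y (Ideal.span {a}),
        IsYHilbert Y (Ideal.span {a}) ].TFAE) := by
  constructor
  · exact fun I hfg hs => fg_strong_hilbert Y I hfg hs
  · intro a
    tfae_have 2 → 3 := fun h =>
      fg_strong_hilbert Y _ ⟨{a}, by simp⟩ h
    tfae_have 3 → 1 := by
      intro h c hc b hb
      have hs := hilbert_strong Y _ h
      exact hs {c} (Set.finite_singleton c) (Set.singleton_subset_iff.mpr hc) b hb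
    tfae_have 1 → 2 := by
      intro h F _ hFI b hb
      refine h a (Ideal.mem_span_singleton_self a) b ?_
      rintro P ⟨hPY, hPa⟩
      refine hb ⟨hPY, fun x hx => ?_⟩
      exact Ideal.span_le.mpr hPa (hFI hx)
    tfae_finish
end

section
/- The following are equivalent: (a) every ideal of $R$ is a strong $\mathcal{H}_Y$-ideal; (b) every finitely generated ideal of $R$ is a $Y$-Hilbert ideal; (c) every ideal of $R$ is an $\mathcal{H}_Y$-ideal; (d) every principal ideal of $R$ is an $\mathcal{H}_Y$-ideal; (e) every principal ideal of $R$ is a $Y$-Hilbert ideal; (f) $k(Y) = \langle 0 \rangle$ and $R$ is von Neumann regular (for every $a \in R$ there is $b \in R$ with $a = a^2 b$); (g) $k(Y) = \langle 0 \rangle$ and every essential ideal of $R$ is an $\mathcal{H}_Y$-ideal. -/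
section Aux

variable {R : Type*} [CommRing R]

lemma strongToH {Y : Set (Ideal R)} {I : Ideal R} (h : IsStrongHIdeal Y I) :
    IsHIdeal Y I := fun a ha b hb =>
  h {a} (Set.finite_singleton a) (Set.singleton_subset_iff.mpr ha) b hb

/-- In a von Neumann regular ring, every finitely generated ideal is generated by
an idempotent. -/
lemma idem_gen (hv : ∀ a : R, ∃ b : R, a = a ^ 2 * b) (s : Finset R) :
    ∃ e : R, e * e = e ∧ Ideal.span (s : Set R) = Ideal.span {e} := by
  classical
  induction s using Finset.induction_on with
  | empty =>
    refine ⟨0, by ring, ?_⟩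
    rw [Finset.coe_empty, Ideal.span_empty]
    exact (Ideal.span_singleton_eq_bot.mpr rfl).symm
  | @insert a s' ha ih =>
    obtain ⟨e, he, hspan⟩ := ih
    obtain ⟨b, hb⟩ := hv a
    set f := a * b with hf_def
    have hf : f * f = f := by
      simp only [hf_def]; linear_combination (-b) * hb
    have hfa : Ideal.span ({a} : Set R) = Ideal.span {f} := by
      apply le_antisymm
      · rw [Ideal.span_le, Set.singleton_subset_iff]
        exact Ideal.mem_span_singleton.mpr ⟨a, by linear_combination hb⟩
      · rw [Ideal.span_le, Set.singleton_subset_iff]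
        exact Ideal.mem_span_singleton.mpr ⟨b, rfl⟩
    refine ⟨f + e - f * e, by linear_combination (1 - e) ^ 2 * hf + (1 - f) * he, ?_⟩
    rw [Finset.coe_insert, Ideal.span_insert, hspan, hfa]
    apply le_antisymm
    · apply sup_le
      · rw [Ideal.span_le, Set.singleton_subset_iff]
        exact Ideal.mem_span_singleton.mpr ⟨f, by linear_combination (e - 1) * hf⟩
      · rw [Ideal.span_le, Set.singleton_subset_iff]
        exact Ideal.mem_span_singleton.mpr ⟨e, by linear_combination (f - 1) * he⟩
    · rw [Ideal.span_le, Set.singleton_subset_iff]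
      refine Submodule.mem_sup.mpr ⟨f, Ideal.mem_span_singleton_self f,
        e - f * e, Ideal.mem_span_singleton.mpr ⟨1 - f, by ring⟩, by ring⟩

/-- Key implication: (f) implies (a). -/
lemma key_strong {Y : Set (Ideal R)} (hprime : ∀ P ∈ Y, P.IsPrime)
    (hk : kSet Y = ⊥) (hv : ∀ a : R, ∃ b : R, a = a ^ 2 * b) (I : Ideal R) :
    IsStrongHIdeal Y I := by
  intro F hF hFI b hb
  obtain ⟨s, rfl⟩ := hF.exists_finset_coe
  obtain ⟨e, he, hspan⟩ := idem_gen hv s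
  have hsI : Ideal.span (s : Set R) ≤ I := Ideal.span_le.mpr hFI
  have heI : e ∈ I := hsI (hspan ▸ Ideal.mem_span_singleton_self e)
  have hz : b * (1 - e) ∈ kSet Y := by
    refine Submodule.mem_sInf.mpr fun P hP => ?_
    by_cases hE : e ∈ P
    · have hsP : (s : Set R) ⊆ (P : Set R) := by
        refine Set.Subset.trans Ideal.subset_span ?_
        rw [hspan]
        exact Ideal.span_le.mpr (Set.singleton_subset_iff.mpr hE)
      have hbP : b ∈ P := (hb ⟨hP, hsP⟩).2 rfl
      exact Ideal.mul_mem_right _ _ hbP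
    · have h0 : e * (1 - e) ∈ P := by
        have : e * (1 - e) = 0 := by linear_combination -he
        rw [this]; exact P.zero_mem
      rcases (hprime P hP).mem_or_mem h0 with h | h
      · exact absurd h hE
      · exact Ideal.mul_mem_left _ _ h
  have hb0 : b * (1 - e) = 0 := by rw [hk] at hz; exact (Submodule.mem_bot R).mp hz
  have hbe : b = b * e := by linear_combination hb0
  rw [hbe]
  exact hsI (hspan ▸ Ideal.mem_span_singleton.mpr ⟨b, mul_comm b e⟩)

end Aux

/-- characterizations of the rings in which every ideal is a
(strong) `ℋ_Y`-ideal: this holds iff `k(Y) = ⟨0⟩` and `R` is von Neumann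
regular, etc. -/
theorem stmt15 {R : Type*} [CommRing R] (Y : Set (Ideal R))
    (hprime : ∀ P ∈ Y, P.IsPrime) :
    [ (∀ I : Ideal R, IsStrongHIdeal Y I),
      (∀ I : Ideal R, I.FG → IsYHilbert Y I),
      (∀ I : Ideal R, IsHIdeal Y I),
      (∀ a : R, IsHIdeal Y (Ideal.span {a})),
      (∀ a : R, IsYHilbert Y (Ideal.span {a})),
      (kSet Y = ⊥ ∧ ∀ a : R, ∃ b : R, a = a ^ 2 * b),
      (kSet Y = ⊥ ∧ ∀ E : Ideal R,
        (∀ J : Ideal R, J ≠ ⊥ → E ⊓ J ≠ ⊥) → IsHIdeal Y E) ].TFAE := by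
  have sqzero : kSet Y = ⊥ → ∀ x : R, x * x = 0 → x = 0 := by
    intro hk x hx
    have : x ∈ kSet Y := by
      refine Submodule.mem_sInf.mpr fun P hP => ?_
      rcases (hprime P hP).mem_or_mem (show x * x ∈ P by rw [hx]; exact P.zero_mem) with h | h
      · exact h
      · exact h
    rw [hk] at this
    exact (Submodule.mem_bot R).mp this
  tfae_have 1 → 2 := by
    intro h1 I hFG
    obtain ⟨s, hs⟩ := hFG
    apply le_antisymm
    · intro a ha
      exact Submodule.mem_sInf.mpr fun P hP => hP.2 ha
    · intro b hbI
      refine h1 I (s : Set R) s.finite_toSet (by rw [← hs]; exact Ideal.subset_span) b ?_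
      intro P hP
      have hIP : (I : Set R) ⊆ (P : Set R) := by
        rw [← hs]; exact Ideal.span_le.mpr hP.2
      exact ⟨hP.1, Set.singleton_subset_iff.mpr
        (Submodule.mem_sInf.mp hbI P ⟨hP.1, hIP⟩)⟩
  tfae_have 2 → 5 := by
    intro h2 a
    exact h2 _ ⟨{a}, by simp⟩
  tfae_have 5 → 4 := by
    intro h5 a c hc b hb
    rw [h5 a]
    refine Submodule.mem_sInf.mpr fun P hP => ?_
    have hcP : c ∈ P := hP.2 hc
    exact (hb ⟨hP.1, Set.singleton_subset_iff.mpr hcP⟩).2 rfl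
  tfae_have 4 → 6 := by
    intro h4
    constructor
    · refine le_antisymm (fun a ha => ?_) bot_le
      have := h4 0 0 (Submodule.zero_mem _) a (fun P hP =>
        ⟨hP.1, Set.singleton_subset_iff.mpr (Submodule.mem_sInf.mp ha P hP.1)⟩)
      rwa [Ideal.span_singleton_eq_bot.mpr rfl] at this
    · intro a
      have := h4 (a ^ 2) (a ^ 2) (Ideal.mem_span_singleton_self _) a (fun P hP =>
        ⟨hP.1, Set.singleton_subset_iff.mpr
          ((hprime P hP.1).mem_of_pow_mem 2 (hP.2 rfl))⟩)
      obtain ⟨c, hc⟩ := Ideal.mem_span_singleton.mp this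
      exact ⟨c, hc⟩
  tfae_have 6 → 1 := fun h => key_strong hprime h.1 h.2
  tfae_have 1 → 3 := fun h1 I => strongToH (h1 I)
  tfae_have 3 → 4 := fun h3 a => h3 _
  tfae_have 6 → 7 := fun h =>
    ⟨h.1, fun E _ => strongToH (key_strong hprime h.1 h.2 E)⟩
  tfae_have 7 → 6 := by
    rintro ⟨hk, hE⟩
    refine ⟨hk, fun a => ?_⟩
    set A : Ideal R :=
      { carrier := {x | a ^ 2 * x = 0}
        add_mem' := fun {x y} hx hy => by
          simp only [Set.mem_setOf_eq] at *
          rw [mul_add, hx, hy, add_zero]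
        zero_mem' := mul_zero _
        smul_mem' := fun c x hx => by
          simp only [smul_eq_mul, Set.mem_setOf_eq] at *
          rw [mul_comm c x, ← mul_assoc, hx, zero_mul] } with hA
    set E₀ : Ideal R := Ideal.span {a ^ 2} ⊔ A with hE₀
    have hess : ∀ J : Ideal R, J ≠ ⊥ → E₀ ⊓ J ≠ ⊥ := by
      intro J hJ hEJ
      apply hJ
      refine (Submodule.eq_bot_iff _).mpr fun x hx => ?_
      have h1 : a ^ 2 * x ∈ E₀ ⊓ J :=
        ⟨le_sup_left (α := Ideal R)
          (Ideal.mem_span_singleton.mpr ⟨x, rfl⟩), J.mul_mem_left _ hx⟩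
      rw [hEJ] at h1
      have h2 : a ^ 2 * x = 0 := (Submodule.mem_bot R).mp h1
      have h3 : x ∈ E₀ ⊓ J := ⟨le_sup_right (α := Ideal R) (show x ∈ A from h2), hx⟩
      rw [hEJ] at h3
      exact (Submodule.mem_bot R).mp h3
    have hHE := hE E₀ hess
    have ha2 : a ^ 2 ∈ E₀ :=
      le_sup_left (α := Ideal R) (Ideal.mem_span_singleton_self _)
    have haE : a ∈ E₀ := hHE (a ^ 2) ha2 a (fun P hP =>
      ⟨hP.1, Set.singleton_subset_iff.mpr
        ((hprime P hP.1).mem_of_pow_mem 2 (hP.2 rfl))⟩)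
    obtain ⟨y, hy, z, hz, hyz⟩ := Submodule.mem_sup.mp haE
    obtain ⟨r, hr⟩ := Ideal.mem_span_singleton.mp hy
    have hz' : a ^ 2 * z = 0 := hz
    have haz : a * z = 0 := sqzero hk _ (by linear_combination z * hz')
    have hz0 : z = 0 := sqzero hk _ (by linear_combination z * hyz + haz - r * hz' - z * hr)
    exact ⟨r, by linear_combination (-1 : R) * hyz + hr + hz0⟩
  tfae_finish
end

section
/- Suppose $Y$ is a finite set of prime ideals of $R$. Then for any ideal $I$ of $R$ the following are equivalent: (i) $I$ is an $\mathcal{H}_Y$-ideal; (ii) $I$ is a strong $\mathcal{H}_Y$-ideal; (iii) $I$ is a $Y$-Hilbert ideal. -/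
/-- if `Y` is finite then `ℋ_Y`-ideal, strong `ℋ_Y`-ideal and
`Y`-Hilbert ideal are equivalent notions. -/
theorem stmt16 {R : Type*} [CommRing R] (Y : Set (Ideal R))
    (hprime : ∀ P ∈ Y, P.IsPrime) (hfin : Y.Finite) (I : Ideal R) :
    [ IsHIdeal Y I, IsStrongHIdeal Y I, IsYHilbert Y I ].TFAE := by
  tfae_have 3 → 2 := by
    intro h3 F _ hFI b hsub
    rw [h3, kSet, Ideal.mem_sInf]
    intro P hP
    obtain ⟨hPY, hIP⟩ := hP
    have : P ∈ hSet Y {b} := hsub ⟨hPY, hFI.trans hIP⟩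
    simpa using this.2
  tfae_have 2 → 1 := by
    intro h2 a ha b hsub
    exact h2 {a} (Set.finite_singleton a) (by simpa using ha) b hsub
  tfae_have 1 → 3 := by
    intro h1
    apply le_antisymm
    · intro b hb
      rw [kSet, Ideal.mem_sInf]
      intro P hP
      exact hP.2 hb
    · intro b hb
      rw [kSet, Ideal.mem_sInf] at hb
      -- bad primes: those in Y not containing I
      set B : Set (Ideal R) := {P ∈ Y | ¬ I ≤ P} with hB
      have hBfin : B.Finite := hfin.subset fun P hP => hP.1
      classical
      obtain ⟨a, haI, haB⟩ : ∃ a ∈ I, ∀ P ∈ B, a ∉ P := by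
        by_contra hcon
        push_neg at hcon
        have hsub : (I : Set R) ⊆ ⋃ P ∈ hBfin.toFinset, (P : Set R) := by
          intro x hx
          obtain ⟨P, hPB, hxP⟩ := hcon x hx
          exact Set.mem_biUnion (hBfin.mem_toFinset.mpr hPB) hxP
        have := (Ideal.subset_union_prime (⊥ : Ideal R) ⊥
          (fun P hP _ _ => hprime P (hBfin.mem_toFinset.mp hP).1)).mp hsub
        obtain ⟨P, hPB, hIP⟩ := this
        exact (hBfin.mem_toFinset.mp hPB).2 hIP
      refine h1 a haI b ?_
      intro P hP
      obtain ⟨hPY, haP⟩ := hP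
      have hIP : I ≤ P := by
        by_contra hnot
        exact haB P ⟨hPY, hnot⟩ (by simpa using haP)
      exact ⟨hPY, by simpa using hb (show P ∈ hSet Y (I : Set R) from ⟨hPY, hIP⟩)⟩
  tfae_finish
end

section
/- Let $f : R \to R'$ be a homomorphism of commutative rings, let $X$ be a set of prime ideals of $R$ and $Y$ a set of prime ideals of $R'$. Then every strong $\mathcal{H}_Y$-ideal $J$ of $R'$ has contraction $f^{-1}(J)$ a strong $\mathcal{H}_X$-ideal of $R$ if and only if for every $P \in Y$ the contraction $f^{-1}(P)$ is a strong $\mathcal{H}_X$-ideal of $R$. The analogous equivalence holds with '$\mathcal{H}$-ideal' in place of 'strong $\mathcal{H}$-ideal' throughout. -/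
/-- every strong `ℋ_Y`-ideal of `R'` contracts to a strong
`ℋ_X`-ideal of `R` iff every `P ∈ Y` contracts to a strong `ℋ_X`-ideal; likewise
for `ℋ`-ideals. -/
theorem stmt17 {R R' : Type*} [CommRing R] [CommRing R'] (f : R →+* R')
    (X : Set (Ideal R)) (hX : ∀ P ∈ X, P.IsPrime)
    (Y : Set (Ideal R')) (hY : ∀ P ∈ Y, P.IsPrime) :
    ((∀ J : Ideal R', IsStrongHIdeal Y J → IsStrongHIdeal X (J.comap f)) ↔
      (∀ P ∈ Y, IsStrongHIdeal X (P.comap f))) ∧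
    ((∀ J : Ideal R', IsHIdeal Y J → IsHIdeal X (J.comap f)) ↔
      (∀ P ∈ Y, IsHIdeal X (P.comap f))) := by

  constructor
  · constructor
    · intro h P hP
      exact h P (fun F hF hFP b hb => hb ⟨hP, hFP⟩ |>.2 rfl)
    · intro h J hJ F hF hFJ b hb
      refine hJ (f '' F) (hF.image f) ?_ (f b) ?_
      · rintro _ ⟨a, haF, rfl⟩; exact hFJ haF
      · rintro Q ⟨hQY, hQF⟩
        have hFQ : F ⊆ (Q.comap f : Set R) := fun a ha => hQF ⟨a, ha, rfl⟩
        have := h Q hQY F hF hFQ b (fun P hP => hb hP)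
        exact ⟨hQY, by simpa using this⟩
  · constructor
    · intro h P hP
      exact h P (fun a ha b hb => hb ⟨hP, by simpa using ha⟩ |>.2 rfl)
    · intro h J hJ a ha b hb
      refine hJ (f a) ha (f b) ?_
      rintro Q ⟨hQY, hQa⟩
      have haQ : a ∈ Q.comap f := by simpa using hQa rfl
      have := h Q hQY a haQ b hb
      exact ⟨hQY, by simpa using this⟩
end

section
/- Suppose $R$ is reduced, $k(Y) = \langle 0 \rangle$, and $R$ satisfies property $A$ (every finitely generated ideal of $R$ consisting entirely of zero-divisors has a nonzero annihilator). Then every ideal $I$ of $R$ all of whose elements are zero-divisors is contained in a proper strong $\mathcal{H}_Y$-ideal of $R$ (and hence in a proper $\mathcal{H}_Y$-ideal). -/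
lemma hSet_anti {R : Type*} [CommRing R] (Y : Set (Ideal R)) {S T : Set R} (h : S ⊆ T) :
    hSet Y T ⊆ hSet Y S := fun P hP => ⟨hP.1, h.trans hP.2⟩

/-- if `R` is reduced, `k(Y) = ⟨0⟩` and `R` satisfies property `A`,
then every ideal consisting of zero-divisors is contained in a proper strong
`ℋ_Y`-ideal (hence in a proper `ℋ_Y`-ideal). -/
theorem stmt18 {R : Type*} [CommRing R] [IsReduced R] (Y : Set (Ideal R))
    (hprime : ∀ P ∈ Y, P.IsPrime) (h0 : kSet Y = ⊥)
    (hA : ∀ J : Ideal R, J.FG → (∀ a ∈ J, ∃ b : R, b ≠ 0 ∧ a * b = 0) →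
      ∃ c : R, c ≠ 0 ∧ ∀ a ∈ J, a * c = 0)
    (I : Ideal R) (hsing : ∀ a ∈ I, ∃ b : R, b ≠ 0 ∧ a * b = 0) :
    ∃ J : Ideal R, J ≠ ⊤ ∧ IsStrongHIdeal Y J ∧ IsHIdeal Y J ∧ I ≤ J := by
  set Jc : Set R := {b | ∃ F : Set R, F.Finite ∧ F ⊆ (I : Set R) ∧ hSet Y F ⊆ hSet Y {b}}
    with hJc
  have zero_mem : (0 : R) ∈ Jc := by
    refine ⟨∅, Set.finite_empty, Set.empty_subset _, fun P hP => ⟨hP.1, ?_⟩⟩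
    intro x hx
    simp only [Set.mem_singleton_iff] at hx
    simpa [hx] using P.zero_mem
  have add_mem : ∀ {a b : R}, a ∈ Jc → b ∈ Jc → a + b ∈ Jc := by
    rintro a b ⟨F1, hF1, hF1I, hF1h⟩ ⟨F2, hF2, hF2I, hF2h⟩
    refine ⟨F1 ∪ F2, hF1.union hF2, Set.union_subset hF1I hF2I, fun P hP => ⟨hP.1, ?_⟩⟩
    intro x hx
    simp only [Set.mem_singleton_iff] at hx
    subst hx
    have h1 : a ∈ P := (hF1h (hSet_anti Y Set.subset_union_left hP)).2 rfl
    have h2 : b ∈ P := (hF2h (hSet_anti Y Set.subset_union_right hP)).2 rfl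
    exact P.add_mem h1 h2
  have smul_mem : ∀ (r : R) {b : R}, b ∈ Jc → r * b ∈ Jc := by
    rintro r b ⟨F, hF, hFI, hFh⟩
    refine ⟨F, hF, hFI, fun P hP => ⟨hP.1, ?_⟩⟩
    intro x hx
    simp only [Set.mem_singleton_iff] at hx
    subst hx
    exact P.mul_mem_left r ((hFh hP).2 rfl)
  refine ⟨{ carrier := Jc, zero_mem' := zero_mem, add_mem' := add_mem,
            smul_mem' := fun r b h => smul_mem r h }, ?_, ?_, ?_, ?_⟩
  · -- proper
    intro htop
    rw [Submodule.eq_top_iff'] at htop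
    have h1 : (1 : R) ∈ Jc := htop 1
    obtain ⟨F, hF, hFI, hFh⟩ := h1
    obtain ⟨c, hc, hann⟩ := hA (Ideal.span F) (⟨hF.toFinset, by simp⟩)
      (fun a ha => by
        refine hsing a ?_
        exact Ideal.span_le.mpr hFI ha)
    -- find P ∈ Y with c ∉ P
    have : ∃ P ∈ Y, c ∉ P := by
      by_contra hcon
      push_neg at hcon
      have : c ∈ kSet Y := (Submodule.mem_sInf).mpr fun P hP => hcon P hP
      rw [h0] at this
      exact hc (by simpa using this)
    obtain ⟨P, hPY, hcP⟩ := this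
    have hPprime := hprime P hPY
    have hPmem : P ∈ hSet Y F := by
      refine ⟨hPY, fun a ha => ?_⟩
      have : a * c = 0 := hann a (Ideal.subset_span ha)
      rcases hPprime.mul_mem_iff_mem_or_mem.mp (this ▸ P.zero_mem) with h | h
      · exact h
      · exact absurd h hcP
    have : (1 : R) ∈ P := (hFh hPmem).2 rfl
    exact hPprime.ne_top ((Ideal.eq_top_iff_one P).mpr this)
  · -- strong H ideal
    intro F hF hFJ b hb
    have : Finite F := hF
    choose G hGfin hGI hGh using fun f : F => hFJ f.2
    refine ⟨⋃ f : F, G f, Set.finite_iUnion hGfin, Set.iUnion_subset fun f => hGI f, ?_⟩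
    intro P hP
    have hPF : P ∈ hSet Y F := by
      refine ⟨hP.1, fun f hf => ?_⟩
      have : P ∈ hSet Y (G ⟨f, hf⟩) :=
        hSet_anti Y (Set.subset_iUnion (fun f : F => G f) ⟨f, hf⟩) hP
      exact (hGh ⟨f, hf⟩ this).2 rfl
    exact hb hPF
  · -- H ideal
    rintro a ⟨F, hF, hFI, hFh⟩ b hab
    exact ⟨F, hF, hFI, hFh.trans hab⟩
  · -- I ≤ J
    intro a ha
    exact ⟨{a}, Set.finite_singleton a, Set.singleton_subset_iff.mpr ha, subset_rfl⟩
end
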